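/- Let a_1,…,a_m be nonzero vectors in ℂ^d. For i = 1,…,c let w_i > 0 with Σ_{i=1}^{c} w_i = 1; let R_i be a finite composition of relaxed projections P_{a_v}^{ω_v} with indices v drawn from a list L_i ⊆ {1,…,m} and relaxation parameters ω_v ∈ (0,2); let G_i ⊆ {1,…,m}, α_i < 1, and let C_i be a linear operator on ℂ^d such that C_i x = x whenever ⟨x, a_u⟩ = 0 for all u ∈ G_i, C_i maps H_i := span{a_u : u ∈ G_i} into itself, and ‖C_i x‖ ≤ α_i ‖x‖ for every x ∈ H_i. Assume every index j ∈ {1,…,m} occurs in some list L_i or belongs to some set G_i, and set T = Σ_{i=1}^{c} w_i (C_i ∘ R_i). If x ∈ ℂ^d satisfies ‖T x‖ = ‖x‖, then ⟨x, a_j⟩ = 0 for every j = 1,…,m. -/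

import Mathlib

open scoped ComplexConjugate


/-- The relaxed projection `P_a^ω x = x - ω (⟨x,a⟩/‖a‖²) a` associated to a vector `a ∈ ℂ^d`
and a real relaxation parameter `ω`. -/
noncomputable def relaxProj {d : ℕ} (a : EuclideanSpace ℂ (Fin d)) (ω : ℝ)
    (x : EuclideanSpace ℂ (Fin d)) : EuclideanSpace ℂ (Fin d) :=
  x - ((ω : ℂ) * ((inner ℂ a x : ℂ) / (‖a‖ : ℂ) ^ 2)) • a


lemma relaxProj_norm_sq {d : ℕ} (a : EuclideanSpace ℂ (Fin d)) (ha : a ≠ 0) (ω : ℝ)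
    (x : EuclideanSpace ℂ (Fin d)) :
    ‖relaxProj a ω x‖ ^ 2
      = ‖x‖ ^ 2 - ω * (2 - ω) * (‖(inner ℂ a x : ℂ)‖ ^ 2 / ‖a‖ ^ 2) := by
  have hna : (‖a‖ : ℝ) ≠ 0 := norm_ne_zero_iff.mpr ha
  set s : ℂ := inner ℂ a x with hs
  set cc : ℂ := (ω : ℂ) * (s / (‖a‖ : ℂ) ^ 2) with hc
  have key : ‖x - cc • a‖ ^ 2 = ‖x‖ ^ 2 - 2 * Complex.re (inner ℂ x (cc • a) : ℂ) + ‖cc • a‖ ^ 2 :=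
    @norm_sub_sq ℂ _ _ _ _ x (cc • a)
  have hsc : s * conj s = ((‖s‖ : ℝ) : ℂ) ^ 2 := by
    rw [Complex.mul_conj]
    norm_cast
    rw [Complex.normSq_eq_norm_sq]
  have h1 : (inner ℂ x (cc • a) : ℂ) = cc * conj s := by
    rw [inner_smul_right, hs, ← inner_conj_symm]
  have h2 : cc * conj s = (((ω * ‖s‖ ^ 2 / ‖a‖ ^ 2 : ℝ)) : ℂ) := by
    have : cc * conj s = (ω : ℂ) * ((s * conj s) / (‖a‖ : ℂ) ^ 2) := by rw [hc]; ring
    rw [this, hsc]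
    push_cast
    ring
  have h3 : ‖cc • a‖ ^ 2 = ω ^ 2 * ‖s‖ ^ 2 / ‖a‖ ^ 2 := by
    rw [norm_smul, hc, norm_mul, norm_div, norm_pow]
    simp only [Complex.norm_real, Real.norm_eq_abs, abs_of_nonneg (norm_nonneg a), sq_abs]
    field_simp
    rw [sq_abs]
    ring
  have hrp : relaxProj a ω x = x - cc • a := rfl
  rw [hrp, key, h1, h2, h3]
  simp only [Complex.ofReal_re]
  field_simp
  ring

lemma relaxProj_norm_le {d : ℕ} (a : EuclideanSpace ℂ (Fin d)) (ha : a ≠ 0) {ω : ℝ}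
    (hω : ω ∈ Set.Ioo (0 : ℝ) 2) (x : EuclideanSpace ℂ (Fin d)) :
    ‖relaxProj a ω x‖ ≤ ‖x‖ := by
  have h := relaxProj_norm_sq a ha ω x
  have hna : (0 : ℝ) < ‖a‖ := norm_pos_iff.mpr ha
  have hterm : 0 ≤ ω * (2 - ω) * (‖(inner ℂ a x : ℂ)‖ ^ 2 / ‖a‖ ^ 2) := by
    have h1 : 0 < ω * (2 - ω) := mul_pos hω.1 (by linarith [hω.2])
    have h2 : 0 ≤ ‖(inner ℂ a x : ℂ)‖ ^ 2 / ‖a‖ ^ 2 := by positivity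
    exact mul_nonneg h1.le h2
  nlinarith [norm_nonneg (relaxProj a ω x), norm_nonneg x]

lemma relaxProj_eq_of_norm_eq {d : ℕ} (a : EuclideanSpace ℂ (Fin d)) (ha : a ≠ 0) {ω : ℝ}
    (hω : ω ∈ Set.Ioo (0 : ℝ) 2) (x : EuclideanSpace ℂ (Fin d))
    (hx : ‖relaxProj a ω x‖ = ‖x‖) :
    (inner ℂ a x : ℂ) = 0 ∧ relaxProj a ω x = x := by
  have h := relaxProj_norm_sq a ha ω x
  have hna : (0 : ℝ) < ‖a‖ := norm_pos_iff.mpr ha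
  have hω1 : 0 < ω := hω.1
  have hω2 : 0 < 2 - ω := by linarith [hω.2]
  have hz : ‖(inner ℂ a x : ℂ)‖ ^ 2 = 0 := by
    rw [hx] at h
    have h2 : ω * (2 - ω) * (‖(inner ℂ a x : ℂ)‖ ^ 2 / ‖a‖ ^ 2) = 0 := by linarith
    have h3 : ‖(inner ℂ a x : ℂ)‖ ^ 2 / ‖a‖ ^ 2 = 0 := by
      by_contra hc
      have hp : 0 < ‖(inner ℂ a x : ℂ)‖ ^ 2 / ‖a‖ ^ 2 := lt_of_le_of_ne (by positivity) (Ne.symm hc)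
      nlinarith [mul_pos (mul_pos hω1 hω2) hp]
    rcases div_eq_zero_iff.mp h3 with h4 | h4
    · exact h4
    · exact absurd h4 (by positivity)
  have hi : (inner ℂ a x : ℂ) = 0 := by
    have := pow_eq_zero_iff (n := 2) (by norm_num) |>.mp hz
    exact norm_eq_zero.mp this
  refine ⟨hi, ?_⟩
  simp [relaxProj, hi]

lemma foldl_norm_le {d m : ℕ} (a : Fin m → EuclideanSpace ℂ (Fin d)) (ha : ∀ j, a j ≠ 0)
    (ω : Fin m → ℝ) :
    ∀ (l : List (Fin m)), (∀ v ∈ l, ω v ∈ Set.Ioo (0 : ℝ) 2) →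
      ∀ x, ‖l.foldl (fun y v => relaxProj (a v) (ω v) y) x‖ ≤ ‖x‖
  | [], _, x => le_refl _
  | v :: t, h, x => by
    simp only [List.foldl_cons]
    exact (foldl_norm_le a ha ω t (fun u hu => h u (List.mem_cons_of_mem _ hu)) _).trans
      (relaxProj_norm_le (a v) (ha v) (h v List.mem_cons_self) x)

lemma foldl_eq_of_norm_eq {d m : ℕ} (a : Fin m → EuclideanSpace ℂ (Fin d)) (ha : ∀ j, a j ≠ 0)
    (ω : Fin m → ℝ) :
    ∀ (l : List (Fin m)), (∀ v ∈ l, ω v ∈ Set.Ioo (0 : ℝ) 2) →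
      ∀ x, ‖l.foldl (fun y v => relaxProj (a v) (ω v) y) x‖ = ‖x‖ →
        (∀ v ∈ l, (inner ℂ (a v) x : ℂ) = 0) ∧
          l.foldl (fun y v => relaxProj (a v) (ω v) y) x = x
  | [], _, x, _ => ⟨fun v hv => absurd hv (List.not_mem_nil), rfl⟩
  | v :: t, h, x, hx => by
    have hωv := h v List.mem_cons_self
    have ht : ∀ u ∈ t, ω u ∈ Set.Ioo (0 : ℝ) 2 := fun u hu => h u (List.mem_cons_of_mem _ hu)
    simp only [List.foldl_cons] at hx ⊢
    have h1 : ‖t.foldl (fun y v => relaxProj (a v) (ω v) y) (relaxProj (a v) (ω v) x)‖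
        ≤ ‖relaxProj (a v) (ω v) x‖ := foldl_norm_le a ha ω t ht _
    have h2 : ‖relaxProj (a v) (ω v) x‖ ≤ ‖x‖ := relaxProj_norm_le (a v) (ha v) hωv x
    have h3 : ‖relaxProj (a v) (ω v) x‖ = ‖x‖ := le_antisymm h2 (hx ▸ h1)
    obtain ⟨hi, hfix⟩ := relaxProj_eq_of_norm_eq (a v) (ha v) hωv x h3
    rw [hfix] at hx ⊢
    obtain ⟨hall, heq⟩ := foldl_eq_of_norm_eq a ha ω t ht x hx
    refine ⟨fun u hu => ?_, heq⟩
    rcases List.mem_cons.mp hu with rfl | hu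
    · exact hi
    · exact hall u hu

lemma contract_norm {d : ℕ} (K : Submodule ℂ (EuclideanSpace ℂ (Fin d)))
    (C : EuclideanSpace ℂ (Fin d) →ₗ[ℂ] EuclideanSpace ℂ (Fin d)) {α : ℝ} (hα : α < 1)
    (hfix : ∀ y ∈ Kᗮ, C y = y) (hinv : ∀ y ∈ K, C y ∈ K) (hcon : ∀ y ∈ K, ‖C y‖ ≤ α * ‖y‖)
    (y : EuclideanSpace ℂ (Fin d)) :
    ‖C y‖ ≤ ‖y‖ ∧ (‖C y‖ = ‖y‖ → y ∈ Kᗮ) := by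
  set p : EuclideanSpace ℂ (Fin d) := (K.orthogonalProjectionOnto y : EuclideanSpace ℂ (Fin d))
    with hp
  have hpK : p ∈ K := (K.orthogonalProjectionOnto y).2
  set q : EuclideanSpace ℂ (Fin d) := y - p with hqdef
  have hqO : q ∈ Kᗮ := Submodule.sub_starProjection_mem_orthogonal (K := K) y
  have hy : y = p + q := by rw [hqdef]; abel
  have hCq : C q = q := hfix q hqO
  have hCy : C y = C p + q := by rw [hy, map_add, hCq]
  have hCpK : C p ∈ K := hinv p hpK
  have horth1 : (inner ℂ (C p) q : ℂ) = 0 :=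
    Submodule.inner_right_of_mem_orthogonal hCpK hqO
  have horth2 : (inner ℂ p q : ℂ) = 0 :=
    Submodule.inner_right_of_mem_orthogonal hpK hqO
  have hnCy : ‖C y‖ ^ 2 = ‖C p‖ ^ 2 + ‖q‖ ^ 2 := by
    rw [hCy, @norm_add_sq ℂ _ _ _ _, horth1]
    simp
  have hny : ‖y‖ ^ 2 = ‖p‖ ^ 2 + ‖q‖ ^ 2 := by
    rw [hy, @norm_add_sq ℂ _ _ _ _, horth2]
    simp
  clear_value p q
  have hCp : ‖C p‖ ≤ α * ‖p‖ := hcon p hpK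
  have hCp' : ‖C p‖ ≤ ‖p‖ := by
    refine hCp.trans ?_
    have h0 : 0 ≤ (1 - α) * ‖p‖ := mul_nonneg (by linarith) (norm_nonneg p)
    linarith [mul_nonneg (by linarith : (0:ℝ) ≤ 1 - α) (norm_nonneg p)]
  have hCpsq : ‖C p‖ ^ 2 ≤ ‖p‖ ^ 2 := pow_le_pow_left₀ (norm_nonneg _) hCp' 2
  constructor
  · have hsq : ‖C y‖ ^ 2 ≤ ‖y‖ ^ 2 := by linarith
    exact (pow_le_pow_iff_left₀ (norm_nonneg _) (norm_nonneg _) (by norm_num)).mp hsq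
  · intro heq
    have hp0 : p = 0 := by
      by_contra hp0
      have hppos : 0 < ‖p‖ := norm_pos_iff.mpr hp0
      have hlt : ‖C p‖ < ‖p‖ := by
        refine hCp.trans_lt ?_
        have := mul_pos (by linarith : (0:ℝ) < 1 - α) hppos
        linarith
      have hsq : ‖C p‖ ^ 2 < ‖p‖ ^ 2 :=
        pow_lt_pow_left₀ hlt (norm_nonneg _) (by norm_num)
      have h3 : ‖C y‖ ^ 2 = ‖y‖ ^ 2 := by rw [heq]
      linarith
    rw [hy, hp0, zero_add]
    exact hqO

/-- With `T = Σ_i w_i (C_i ∘ R_i)` built from compositions `R_i` of relaxed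
projections (parameters in `(0,2)`) along lists `L_i` and operators `C_i` fixing
`{a_u : u ∈ G_i}ᗮ`, leaving `H_i = span{a_u : u ∈ G_i}` invariant and `α_i`-contractive on it,
where the lists and sets together cover all indices: if `‖T x‖ = ‖x‖` then `⟨x, a_j⟩ = 0` for
every `j`. -/
theorem stmt_8 {d m c : ℕ} (a : Fin m → EuclideanSpace ℂ (Fin d)) (ha : ∀ j, a j ≠ 0)
    (w : Fin c → ℝ) (hw : ∀ i, 0 < w i) (hw1 : ∑ i, w i = 1)
    (L : Fin c → List (Fin m)) (ω : Fin m → ℝ)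
    (hω : ∀ i, ∀ v ∈ L i, ω v ∈ Set.Ioo (0 : ℝ) 2)
    (R : Fin c → EuclideanSpace ℂ (Fin d) → EuclideanSpace ℂ (Fin d))
    (hR : ∀ i x, R i x = (L i).foldl (fun y v => relaxProj (a v) (ω v) y) x)
    (G : Fin c → Set (Fin m)) (α : Fin c → ℝ) (hα : ∀ i, α i < 1)
    (C : Fin c → (EuclideanSpace ℂ (Fin d) →ₗ[ℂ] EuclideanSpace ℂ (Fin d)))
    (hCfix : ∀ i x, (∀ u ∈ G i, (inner ℂ (a u) x : ℂ) = 0) → C i x = x)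
    (hCinv : ∀ i, ∀ x ∈ Submodule.span ℂ (a '' G i), C i x ∈ Submodule.span ℂ (a '' G i))
    (hCcon : ∀ i, ∀ x ∈ Submodule.span ℂ (a '' G i), ‖C i x‖ ≤ α i * ‖x‖)
    (hcover : ∀ j : Fin m, (∃ i, j ∈ L i) ∨ (∃ i, j ∈ G i))
    (T : EuclideanSpace ℂ (Fin d) → EuclideanSpace ℂ (Fin d))
    (hT : ∀ x, T x = ∑ i, w i • C i (R i x))
    (x : EuclideanSpace ℂ (Fin d)) (hx : ‖T x‖ = ‖x‖) :
    ∀ j, (inner ℂ (a j) x : ℂ) = 0 := by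
  have hRle : ∀ i, ‖R i x‖ ≤ ‖x‖ := fun i => by
    rw [hR]; exact foldl_norm_le a ha ω (L i) (hω i) x
  have hKfix : ∀ i, ∀ y ∈ (Submodule.span ℂ (a '' G i))ᗮ, C i y = y := by
    intro i y hy
    apply hCfix
    intro u hu
    exact (Submodule.mem_orthogonal _ y).mp hy (a u) (Submodule.subset_span ⟨u, hu, rfl⟩)
  have hC : ∀ i y, ‖C i y‖ ≤ ‖y‖ ∧ (‖C i y‖ = ‖y‖ → y ∈ (Submodule.span ℂ (a '' G i))ᗮ) :=
    fun i y => contract_norm (Submodule.span ℂ (a '' G i)) (C i) (hα i) (hKfix i)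
      (hCinv i) (hCcon i) y
  have hle1 : ∀ i, ‖C i (R i x)‖ ≤ ‖x‖ := fun i => ((hC i (R i x)).1).trans (hRle i)
  have hTle : ‖T x‖ ≤ ∑ i, w i * ‖C i (R i x)‖ := by
    rw [hT]
    refine (norm_sum_le _ _).trans ?_
    refine Finset.sum_le_sum fun i _ => ?_
    rw [norm_smul, Real.norm_eq_abs, abs_of_pos (hw i)]
  have hsum_le : ∀ i ∈ Finset.univ, w i * ‖C i (R i x)‖ ≤ w i * ‖x‖ :=
    fun i _ => mul_le_mul_of_nonneg_left (hle1 i) (hw i).le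
  have htot : ∑ i, w i * ‖C i (R i x)‖ = ∑ i, w i * ‖x‖ := by
    have h1 : ‖x‖ ≤ ∑ i, w i * ‖C i (R i x)‖ := hx ▸ hTle
    have h2 : ∑ i, w i * ‖x‖ = ‖x‖ := by rw [← Finset.sum_mul, hw1, one_mul]
    have h3 : ∑ i, w i * ‖C i (R i x)‖ ≤ ∑ i, w i * ‖x‖ := Finset.sum_le_sum hsum_le
    linarith
  have hterm := (Finset.sum_eq_sum_iff_of_le hsum_le).mp htot
  have key : ∀ i, (∀ v ∈ L i, (inner ℂ (a v) x : ℂ) = 0) ∧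
      (∀ u ∈ G i, (inner ℂ (a u) x : ℂ) = 0) := by
    intro i
    have hCR : ‖C i (R i x)‖ = ‖x‖ :=
      mul_left_cancel₀ (hw i).ne' (hterm i (Finset.mem_univ i))
    have hRx : ‖R i x‖ = ‖x‖ :=
      le_antisymm (hRle i) (hCR.symm.trans_le (hC i (R i x)).1)
    have hRx' : ‖(L i).foldl (fun y v => relaxProj (a v) (ω v) y) x‖ = ‖x‖ := by
      rw [← hR]; exact hRx
    obtain ⟨hL, hfold⟩ := foldl_eq_of_norm_eq a ha ω (L i) (hω i) x hRx'
    have hRix : R i x = x := (hR i x).trans hfold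
    have hCx : ‖C i x‖ = ‖x‖ := by rw [hRix] at hCR; exact hCR
    have hxO := (hC i x).2 hCx
    exact ⟨hL, fun u hu =>
      (Submodule.mem_orthogonal _ x).mp hxO (a u) (Submodule.subset_span ⟨u, hu, rfl⟩)⟩
  intro j
  rcases hcover j with ⟨i, hij⟩ | ⟨i, hij⟩
  · exact (key i).1 j hij
  · exact (key i).2 j hij
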